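/- Let n ≥ 1, β > 0, δ > 0, and let A be an n×n entrywise nonnegative symmetric matrix with zero diagonal. Suppose p : [0,∞) → ℝⁿ is differentiable, satisfies p'(t) = (βA − δI)p(t) − β·diag(p(t))·A·p(t) for all t ≥ 0, and p(0) ∈ [0,1]ⁿ. Then p(t) is entrywise nonnegative for every t ≥ 0. -/

import Mathlib

open Matrix


lemma sq_max_hasDerivAt (y : ℝ) :
    HasDerivAt (fun x : ℝ => max x 0 ^ 2) (2 * max y 0) y := by
  rcases lt_trichotomy y 0 with hy | hy | hy
  · have hev : (fun x : ℝ => max x 0 ^ 2) =ᶠ[nhds y] fun _ => (0:ℝ) := by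
      filter_upwards [Iio_mem_nhds hy] with x hx
      simp [max_eq_right (le_of_lt (Set.mem_Iio.mp hx))]
    have h0 : HasDerivAt (fun _ : ℝ => (0:ℝ)) 0 y := hasDerivAt_const y 0
    have := h0.congr_of_eventuallyEq hev
    simpa [max_eq_right hy.le] using this
  · subst hy
    rw [hasDerivAt_iff_tendsto_slope]
    simp only [max_self]
    have hb : ∀ x : ℝ, ‖slope (fun x : ℝ => max x 0 ^ 2) 0 x‖ ≤ |x| := by
      intro x
      rcases le_or_gt x 0 with h | h
      · simp [slope_def_field, max_eq_right h, abs_nonneg]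
      · rw [slope_def_field]
        simp only [max_eq_left h.le, max_self]
        rw [show (0:ℝ) ^ 2 = 0 by norm_num, sub_zero, sub_zero, pow_two,
          mul_div_assoc, div_self h.ne', mul_one]
        rw [Real.norm_eq_abs]
    have habs : Filter.Tendsto (fun x : ℝ => |x|) (nhdsWithin 0 {(0:ℝ)}ᶜ) (nhds 0) := by
      have : Filter.Tendsto (fun x : ℝ => |x|) (nhds 0) (nhds |0|) :=
        continuous_abs.tendsto 0
      simpa using this.mono_left nhdsWithin_le_nhds
    rw [show (2:ℝ) * 0 = 0 by ring]
    exact squeeze_zero_norm (fun x => hb x) habs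
  · have hev : (fun x : ℝ => max x 0 ^ 2) =ᶠ[nhds y] fun x => x ^ 2 := by
      filter_upwards [Ioi_mem_nhds hy] with x hx
      simp [max_eq_left (le_of_lt (Set.mem_Ioi.mp hx))]
    have h0 : HasDerivAt (fun x : ℝ => x ^ 2) (2 * y) y := by
      simpa using hasDerivAt_pow 2 y
    have := h0.congr_of_eventuallyEq hev
    simpa [max_eq_left hy.le] using this

lemma negpart_mul_self (x : ℝ) : max (-x) 0 * x = -(max (-x) 0) ^ 2 := by
  rcases le_or_gt x 0 with h | h
  · rw [max_eq_left (by linarith)]; ring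
  · rw [max_eq_right (by linarith)]; ring

/-- For the N-intertwined model `p' = (βA - δI)p - β diag(p) A p` over a static
network with nonnegative symmetric adjacency matrix `A` with zero diagonal, if
`p(0) ∈ [0,1]ⁿ` then `p(t)` is entrywise nonnegative for all `t ≥ 0`. -/
theorem stmt6 {n : ℕ} (hn : 1 ≤ n) (β δ : ℝ) (hβ : 0 < β) (hδ : 0 < δ)
    (A : Matrix (Fin n) (Fin n) ℝ)
    (hAnn : ∀ i j, 0 ≤ A i j) (hAsymm : A.IsSymm) (hAdiag : ∀ i, A i i = 0)
    (p : ℝ → Fin n → ℝ)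
    (hp : ∀ t : ℝ, 0 ≤ t → HasDerivAt p
      ((β • A - δ • (1 : Matrix (Fin n) (Fin n) ℝ)).mulVec (p t)
        - β • (Matrix.diagonal (p t) * A).mulVec (p t)) t)
    (hp0 : ∀ i, p 0 i ∈ Set.Icc (0 : ℝ) 1) :
    ∀ t : ℝ, 0 ≤ t → ∀ i, 0 ≤ p t i := by
  intro t ht
  -- notation
  set m : ℝ → Fin n → ℝ := fun s i => max (-(p s i)) 0 with hm_def
  set V : ℝ → ℝ := fun s => ∑ i, m s i ^ 2 with hV_def
  -- the derivative vector
  set D : ℝ → Fin n → ℝ := fun s =>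
    ((β • A - δ • (1 : Matrix (Fin n) (Fin n) ℝ)).mulVec (p s)
        - β • (Matrix.diagonal (p s) * A).mulVec (p s)) with hD_def
  have hDcomp : ∀ s i, D s i
      = β * (∑ j, A i j * p s j) - δ * p s i - β * (p s i * ∑ j, A i j * p s j) := by
    intro s i
    have h1 : (Matrix.diagonal (p s) * A).mulVec (p s)
        = (Matrix.diagonal (p s)).mulVec (A.mulVec (p s)) :=
      (Matrix.mulVec_mulVec (p s) (Matrix.diagonal (p s)) A).symm
    simp only [hD_def, Pi.sub_apply, Matrix.sub_mulVec, Matrix.smul_mulVec,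
      Matrix.one_mulVec, Pi.smul_apply, smul_eq_mul, h1, Matrix.mulVec_diagonal]
    simp only [Matrix.mulVec, dotProduct]
    try ring
  -- componentwise derivative
  have hcomp : ∀ s : ℝ, 0 ≤ s → ∀ i, HasDerivAt (fun u => p u i) (D s i) s := by
    intro s hs i
    exact hasDerivAt_pi.mp (hp s hs) i
  -- continuity and bound on [0, t]
  have hcont : ContinuousOn p (Set.Icc 0 t) := fun s hs =>
    ((hp s hs.1).continuousAt).continuousWithinAt
  obtain ⟨M, hM⟩ := isCompact_Icc.exists_bound_of_continuousOn hcont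
  have hMc : ∀ s ∈ Set.Icc (0:ℝ) t, ∀ j, |p s j| ≤ M := by
    intro s hs j
    calc |p s j| = ‖p s j‖ := rfl
      _ ≤ ‖p s‖ := norm_le_pi_norm (p s) j
      _ ≤ M := hM s hs
  have i0 : Fin n := ⟨0, hn⟩
  have hM0 : 0 ≤ M := le_trans (abs_nonneg _) (hMc 0 ⟨le_rfl, ht⟩ i0)
  -- entrywise bound of A
  set amax : ℝ := ∑ i, ∑ j, A i j with hamax_def
  have hamax_nn : 0 ≤ amax := Finset.sum_nonneg fun i _ =>
    Finset.sum_nonneg fun j _ => hAnn i j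
  have hamax : ∀ i j, A i j ≤ amax := by
    intro i j
    calc A i j ≤ ∑ j', A i j' :=
          Finset.single_le_sum (fun j' _ => hAnn i j') (Finset.mem_univ j)
      _ ≤ amax := Finset.single_le_sum
          (fun i' _ => Finset.sum_nonneg fun j' _ => hAnn i' j') (Finset.mem_univ i)
  set K : ℝ := 2 * β * amax * n + 2 * β * amax * n * M with hK_def
  -- derivative of V, plus the key inequality
  have hVderiv : ∀ s : ℝ, 0 ≤ s →
      HasDerivAt V (∑ i, 2 * m s i * (-(D s i))) s := by
    intro s hs
    apply HasDerivAt.fun_sum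
    intro i _
    have h1 : HasDerivAt (fun u => -(p u i)) (-(D s i)) s := (hcomp s hs i).neg
    have h2 := (sq_max_hasDerivAt (-(p s i))).comp s h1
    simpa [hm_def, Function.comp_def, mul_comm, mul_assoc, mul_left_comm] using h2
  have hkey : ∀ s ∈ Set.Icc (0:ℝ) t,
      (∑ i, 2 * m s i * (-(D s i))) ≤ K * V s := by
    intro s hs
    set S : ℝ := ∑ j, m s j with hS_def
    have hmnn : ∀ j, 0 ≤ m s j := fun j => le_max_right _ _
    have hpm : ∀ j, -(p s j) ≤ m s j := fun j => le_max_left _ _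
    have hgabs : ∀ i, |∑ j, A i j * p s j| ≤ amax * n * M := by
      intro i
      calc |∑ j, A i j * p s j| ≤ ∑ j, |A i j * p s j| :=
            Finset.abs_sum_le_sum_abs _ _
        _ ≤ ∑ _j : Fin n, amax * M := by
            apply Finset.sum_le_sum
            intro j _
            rw [abs_mul, abs_of_nonneg (hAnn i j)]
            exact mul_le_mul (hamax i j) (hMc s hs j) (abs_nonneg _) hamax_nn
        _ = amax * n * M := by
            rw [Finset.sum_const, Finset.card_univ, Fintype.card_fin, nsmul_eq_mul]
            ring
    have hper : ∀ i, 2 * m s i * (-(D s i))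
        ≤ 2 * β * amax * (m s i * S) + 2 * β * amax * n * M * (m s i) ^ 2 := by
      intro i
      rw [hDcomp s i]
      set g : ℝ := ∑ j, A i j * p s j with hg_def
      have h1 : m s i * p s i = -(m s i) ^ 2 := negpart_mul_self (p s i)
      have h2 : -g ≤ amax * n * M := le_trans (neg_le_abs g) (hgabs i)
      have hA1 : m s i * (-g) ≤ amax * (m s i * S) := by
        have e : m s i * (-g) = ∑ j, A i j * (m s i * -(p s j)) := by
          rw [hg_def, ← Finset.sum_neg_distrib, Finset.mul_sum]
          apply Finset.sum_congr rfl
          intro j _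
          ring
        rw [e]
        calc ∑ j, A i j * (m s i * -(p s j))
            ≤ ∑ j, amax * (m s i * m s j) := by
              apply Finset.sum_le_sum
              intro j _
              have hmm : m s i * -(p s j) ≤ m s i * m s j :=
                mul_le_mul_of_nonneg_left (hpm j) (hmnn i)
              calc A i j * (m s i * -(p s j)) ≤ A i j * (m s i * m s j) :=
                    mul_le_mul_of_nonneg_left hmm (hAnn i j)
                _ ≤ amax * (m s i * m s j) :=
                    mul_le_mul_of_nonneg_right (hamax i j)
                      (mul_nonneg (hmnn i) (hmnn j))
          _ = amax * (m s i * S) := by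
              simp [hS_def, Finset.mul_sum]
      have e1 : 2 * m s i * (-(β * g - δ * p s i - β * (p s i * g)))
          = 2 * β * (m s i * (-g)) + 2 * δ * (m s i * p s i)
            + 2 * β * ((m s i * p s i) * g) := by ring
      rw [e1, h1]
      have h3 : (-(m s i) ^ 2) * g ≤ (m s i) ^ 2 * (amax * n * M) := by
        nlinarith [sq_nonneg (m s i), h2]
      nlinarith [hA1, sq_nonneg (m s i), h3, hβ.le, hδ.le,
        mul_nonneg hδ.le (sq_nonneg (m s i)),
        mul_le_mul_of_nonneg_left hA1 hβ.le,
        mul_le_mul_of_nonneg_left h3 hβ.le]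
    have hS2 : S ^ 2 ≤ n * V s := by
      have := sq_sum_le_card_mul_sum_sq (s := (Finset.univ : Finset (Fin n)))
        (f := m s)
      simpa [hS_def, hV_def] using this
    calc (∑ i, 2 * m s i * (-(D s i)))
        ≤ ∑ i, (2 * β * amax * (m s i * S) + 2 * β * amax * n * M * (m s i) ^ 2) :=
          Finset.sum_le_sum fun i _ => hper i
      _ = 2 * β * amax * S ^ 2 + 2 * β * amax * n * M * V s := by
          rw [Finset.sum_add_distrib, ← Finset.mul_sum, ← Finset.mul_sum,
            ← Finset.sum_mul, ← hS_def]
          rw [hV_def]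
          ring
      _ ≤ K * V s := by
          have : 2 * β * amax * S ^ 2 ≤ 2 * β * amax * (n * V s) :=
            mul_le_mul_of_nonneg_left hS2 (by positivity)
          rw [hK_def]
          nlinarith [this]
  -- the exponential trick
  set W : ℝ → ℝ := fun s => V s * Real.exp (-K * s) with hW_def
  have hWderiv : ∀ s : ℝ, 0 ≤ s → HasDerivAt W
      (((∑ i, 2 * m s i * (-(D s i))) - K * V s) * Real.exp (-K * s)) s := by
    intro s hs
    have he : HasDerivAt (fun u => Real.exp (-K * u)) (-K * Real.exp (-K * s)) s := by
      have := ((hasDerivAt_id s).const_mul (-K)).exp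
      simpa [mul_comm] using this
    have := (hVderiv s hs).fun_mul he
    exact this.congr_deriv (by ring)
  have hanti : AntitoneOn W (Set.Icc 0 t) := by
    apply antitoneOn_of_deriv_nonpos (convex_Icc 0 t)
    · intro s hs
      exact ((hWderiv s hs.1).continuousAt).continuousWithinAt
    · intro s hs
      rw [interior_Icc] at hs
      exact ((hWderiv s hs.1.le).differentiableAt).differentiableWithinAt
    · intro s hs
      rw [interior_Icc] at hs
      rw [(hWderiv s hs.1.le).deriv]
      apply mul_nonpos_of_nonpos_of_nonneg
      · rw [sub_nonpos]
        exact hkey s ⟨hs.1.le, hs.2.le⟩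
      · exact (Real.exp_pos _).le
  have hW0 : W 0 = 0 := by
    have : V 0 = 0 := by
      apply Finset.sum_eq_zero
      intro i _
      have := (hp0 i).1
      simp [hm_def, max_eq_right (by linarith : -(p 0 i) ≤ 0)]
    simp [hW_def, this]
  have hWt : W t ≤ 0 := by
    have := hanti ⟨le_rfl, ht⟩ ⟨ht, le_rfl⟩ ht
    rwa [hW0] at this
  have hVt : V t = 0 := by
    have h1 : 0 ≤ V t := Finset.sum_nonneg fun i _ => sq_nonneg _
    have h2 : V t * Real.exp (-K * t) ≤ 0 := hWt
    nlinarith [Real.exp_pos (-K * t)]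
  intro i
  have him : m t i ^ 2 = 0 := by
    have h1 : m t i ^ 2 ≤ V t :=
      Finset.single_le_sum (fun j _ => sq_nonneg (m t j)) (Finset.mem_univ i)
    nlinarith [sq_nonneg (m t i)]
  have : m t i = 0 := by
    have := sq_eq_zero_iff.mp him
    exact this
  have hle : -(p t i) ≤ 0 := by
    have h2 : -(p t i) ≤ m t i := le_max_left _ _
    linarith [h2, this.le]
  linarith
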